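/- Every homogeneous BNPG on the complete graph with n players has a pure-strategy Nash equilibrium. -/
import Mathlib


/-- Finite difference `Δg(m) = g(m+1) − g(m)`. -/
def Δg (g : ℕ → ℝ) (m : ℕ) : ℝ := g (m + 1) - g m

/-- Number of investing neighbors of player `i` under profile `x` in graph `G`. -/
noncomputable def nInv {V : Type*} (G : SimpleGraph V) (x : V → Bool) (i : V) : ℕ :=
  {j | G.Adj i j ∧ x j = true}.ncard

/-- Pure-strategy Nash equilibrium of the BNPG on `G` with externalities `g` and costs `c`. -/
def IsPSNE {V : Type*} (G : SimpleGraph V) (g : V → ℕ → ℝ) (c : V → ℝ)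
    (x : V → Bool) : Prop :=
  ∀ i, (x i = true → c i ≤ Δg (g i) (nInv G x i)) ∧
       (x i = false → Δg (g i) (nInv G x i) ≤ c i)

open Classical in
lemma ncard_rank_lt {n : ℕ} (σ : Equiv.Perm (Fin n)) (k : ℕ) (hk : k ≤ n) :
    {j : Fin n | ((σ.symm j : Fin n) : ℕ) < k}.ncard = k := by
  have h1 : {j : Fin n | ((σ.symm j : Fin n) : ℕ) < k}
      = σ '' {r : Fin n | (r : ℕ) < k} := by
    ext j
    simp only [Set.mem_setOf_eq, Set.mem_image]
    constructor
    · intro h; exact ⟨σ.symm j, h, by simp⟩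
    · rintro ⟨r, hr, rfl⟩; simpa using hr
  rw [h1, Set.ncard_image_of_injective _ σ.injective]
  rw [Set.ncard_eq_toFinset_card']
  rw [Set.toFinset_setOf]
  have h2 : (Finset.filter (fun r : Fin n => (r : ℕ) < k) Finset.univ).card
      = (Finset.range k).card :=
    Finset.card_bij' (fun r _ => (r : ℕ))
      (fun m hm => (⟨m, lt_of_lt_of_le (Finset.mem_range.mp hm) hk⟩ : Fin n))
      (by intro a ha; simp only [Finset.mem_filter] at ha; simpa using ha.2)
      (by intro m hm; simp [Finset.mem_range.mp hm])
      (by intro a _; simp) (by intro m _; simp)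
  rw [h2, Finset.card_range]

open Classical in
/-- every homogeneous BNPG on the complete graph on `n` players has a PSNE. -/
theorem stmt2 (n : ℕ) (g : ℕ → ℝ) (hmono : Monotone g) (c : Fin n → ℝ) :
    ∃ x : Fin n → Bool, IsPSNE (⊤ : SimpleGraph (Fin n)) (fun _ => g) c x := by
  set σ := Tuple.sort c with hσ
  set d : Fin n → ℝ := c ∘ σ with hd
  have hdmono : Monotone d := Tuple.monotone_sort c
  -- P k : the k-th cheapest player (if any) is happy to invest when k players invest
  set P : ℕ → Prop :=
    fun k => k = 0 ∨ ∃ h : k - 1 < n, d ⟨k - 1, h⟩ ≤ Δg g (k - 1) with hP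
  have hP0 : P 0 := Or.inl rfl
  set k : ℕ := Nat.findGreatest P n with hk
  have hkn : k ≤ n := Nat.findGreatest_le n
  have hPk : P k := Nat.findGreatest_spec (Nat.zero_le n) hP0
  -- if k < n then the (k+1)-th cheapest player does not want to invest
  have hstop : ∀ h : k < n, Δg g k ≤ d ⟨k, h⟩ := by
    intro hkn'
    by_contra h
    push_neg at h
    have : P (k + 1) := Or.inr ⟨by omega, by
      simpa using le_of_lt (by simpa using h)⟩
    exact Nat.findGreatest_is_greatest (Nat.lt_succ_self k) (by omega) this
  refine ⟨fun i => decide (((σ.symm i : Fin n) : ℕ) < k), ?_⟩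
  intro i
  set x : Fin n → Bool := fun i => decide (((σ.symm i : Fin n) : ℕ) < k) with hx
  have hci : c i = d (σ.symm i) := by simp [hd]
  have hninv : nInv (⊤ : SimpleGraph (Fin n)) x i
      = if x i = true then k - 1 else k := by
    have hset : {j : Fin n | (⊤ : SimpleGraph (Fin n)).Adj i j ∧ x j = true}
        = {j : Fin n | ((σ.symm j : Fin n) : ℕ) < k} \ {i} := by
      ext j
      simp only [Set.mem_setOf_eq, Set.mem_diff, Set.mem_singleton_iff,
        SimpleGraph.top_adj, hx, decide_eq_true_eq]
      tauto
    rw [nInv, hset]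
    by_cases hxi : x i = true
    · have hi : i ∈ {j : Fin n | ((σ.symm j : Fin n) : ℕ) < k} := by
        simpa [hx, decide_eq_true_eq] using hxi
      rw [if_pos hxi, Set.ncard_diff_singleton_of_mem hi, ncard_rank_lt σ k hkn]
    · have hi : i ∉ {j : Fin n | ((σ.symm j : Fin n) : ℕ) < k} := by
        simp only [hx, decide_eq_true_eq] at hxi
        simpa using hxi
      rw [if_neg hxi, Set.diff_singleton_eq_self hi, ncard_rank_lt σ k hkn]
  constructor
  · intro hxi
    have hr : ((σ.symm i : Fin n) : ℕ) < k := by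
      simpa [hx, decide_eq_true_eq] using hxi
    have hkpos : 0 < k := Nat.pos_of_ne_zero (by omega)
    obtain ⟨hlt, hle⟩ : ∃ h : k - 1 < n, d ⟨k - 1, h⟩ ≤ Δg g (k - 1) := by
      rcases hPk with h0 | h; · omega
      exact h
    rw [hninv, if_pos hxi, hci]
    calc d (σ.symm i) ≤ d ⟨k - 1, hlt⟩ := hdmono (by
          simp only [Fin.le_def]; omega)
      _ ≤ Δg g (k - 1) := hle
  · intro hxi
    have hr : k ≤ ((σ.symm i : Fin n) : ℕ) := by
      have h := hxi
      simp only [hx, decide_eq_false_iff_not, not_lt] at h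
      exact h
    have hkn' : k < n := lt_of_le_of_lt hr (Fin.is_lt _)
    rw [hninv, if_neg (by simp [hxi]), hci]
    calc Δg g k ≤ d ⟨k, by omega⟩ := hstop hkn'
      _ ≤ d (σ.symm i) := hdmono (by simp only [Fin.le_def]; omega)
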